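/- Let ε > 0 and take the resonant parameters a = 2, b = 1, and let (x₁, v₁, x₂, v₂) : I → ℝ⁴ be any differentiable solution of the stellar-orbit system ẋ₁ = 2 ε⁻¹ v₁, v̇₁ = −2 ε⁻¹ x₁ + x₂²/2, ẋ₂ = ε⁻¹ v₂, v̇₂ = −ε⁻¹ x₂ + 2 x₁ x₂ on an open interval I. Then the resonance variable ξ₃ := x₁ x₂² + 2 v₁ x₂ v₂ − x₁ v₂² is differentiable with d/dt ξ₃(t) = x₂(t)³ v₂(t) + 4 x₁(t) x₂(t)² v₁(t) − 4 x₁(t)² x₂(t) v₂(t) for all t ∈ I; in particular, all ε⁻¹ terms cancel exactly, so ξ₃ is a slow variable whose derivative is bounded independently of ε on bounded solutions. -/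

import Mathlib

/-- For any solution of the stellar-orbit system at resonance (`a = 2`, `b = 1`),
the resonance variable `ξ₃ = x₁ x₂² + 2 v₁ x₂ v₂ - x₁ v₂²` has derivative
`x₂³ v₂ + 4 x₁ x₂² v₁ - 4 x₁² x₂ v₂`: all `ε⁻¹` terms cancel exactly, so `ξ₃` is a
slow variable. -/
theorem stellar_orbit_resonance_slow_variable
    (ε : ℝ) (hε : 0 < ε)
    (s : Set ℝ) (hs : IsOpen s)
    (x₁ v₁ x₂ v₂ : ℝ → ℝ)
    (hx₁ : ∀ t ∈ s, HasDerivAt x₁ (2 * ε⁻¹ * v₁ t) t)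
    (hv₁ : ∀ t ∈ s, HasDerivAt v₁ (-(2 * ε⁻¹ * x₁ t) + x₂ t ^ 2 / 2) t)
    (hx₂ : ∀ t ∈ s, HasDerivAt x₂ (ε⁻¹ * v₂ t) t)
    (hv₂ : ∀ t ∈ s, HasDerivAt v₂ (-(ε⁻¹ * x₂ t) + 2 * x₁ t * x₂ t) t) :
    ∀ t ∈ s, HasDerivAt
      (fun t => x₁ t * x₂ t ^ 2 + 2 * v₁ t * x₂ t * v₂ t - x₁ t * v₂ t ^ 2)
      (x₂ t ^ 3 * v₂ t + 4 * x₁ t * x₂ t ^ 2 * v₁ t - 4 * x₁ t ^ 2 * x₂ t * v₂ t)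
      t := by
  intro t ht
  have h := (((hx₁ t ht).mul ((hx₂ t ht).pow 2)).add
      ((((hv₁ t ht).const_mul 2).mul (hx₂ t ht)).mul (hv₂ t ht))).sub
      ((hx₁ t ht).mul ((hv₂ t ht).pow 2))
  refine h.congr_deriv ?_
  simp only [Pi.mul_apply, Pi.pow_apply, Nat.cast_ofNat, Nat.add_one_sub_one]
  ring
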